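/- arXiv:1604.03230 — 4 statements merged into one kernel-verified Lean document; each statement's English description precedes it below -/
import Mathlib

section
/- Let A be a unital C*-algebra and x ∈ A with ‖1 - x‖ < 1. Let x = u|x| be the polar decomposition (u exists in A since x is invertible). Then ‖1 - u‖ ≤ √2 · ‖1 - x‖. -/
section Aux
variable {A : Type*} [CStarAlgebra A]

/-- A spectral state: a norm-one real functional evaluating `1, a, a*a` at a spectrum point. -/
lemma exists_spectral_state (a : A) (ha : IsSelfAdjoint a) {ν : ℝ} (hν : ν ∈ spectrum ℝ a) :
    ∃ ψ : A →L[ℝ] ℝ, ‖ψ‖ ≤ 1 ∧ ψ 1 = 1 ∧ ψ a = ν ∧ ψ (a * a) = ν * ν := by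
  let T : C(spectrum ℝ a, ℝ) →⋆ₐ[ℝ] A := cfcHom ha
  have hiso : Isometry T := isometry_cfcHom a ha
  have hinj : Function.Injective T := hiso.injective
  let L : C(spectrum ℝ a, ℝ) →ₗ[ℝ] A := T.toAlgHom.toLinearMap
  have hLT : ∀ g, L g = T g := fun g => rfl
  have hinjL : Function.Injective L := hinj
  let p : Subspace ℝ A := LinearMap.range L
  let e : C(spectrum ℝ a, ℝ) ≃ₗ[ℝ] p := LinearEquiv.ofInjective L hinjL
  let evν : C(spectrum ℝ a, ℝ) →ₗ[ℝ] ℝ :=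
    { toFun := fun g => g ⟨ν, hν⟩
      map_add' := fun g h => rfl
      map_smul' := fun c g => rfl }
  let f₀ : p →ₗ[ℝ] ℝ := evν.comp e.symm.toLinearMap
  have hval : ∀ y : p, (L (e.symm y) : A) = (y : A) := by
    intro y
    conv_rhs => rw [← e.apply_symm_apply y]
    rw [LinearEquiv.ofInjective_apply]
  have hbound : ∀ y : p, ‖f₀ y‖ ≤ 1 * ‖y‖ := by
    intro y
    have h1 : ‖f₀ y‖ ≤ ‖e.symm y‖ := by
      exact (e.symm y).norm_coe_le_norm ⟨ν, hν⟩
    have h2 : ‖e.symm y‖ = ‖(y : A)‖ := by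
      rw [← hval y, hLT]
      exact (hiso.norm_map_of_map_zero (map_zero T) _).symm
    rw [one_mul]
    show _ ≤ ‖(y : A)‖
    rw [← h2]
    exact h1
  let f : p →L[ℝ] ℝ := f₀.mkContinuous 1 hbound
  obtain ⟨ψ, hext, hnorm⟩ := exists_extension_norm_eq p f
  have hψval : ∀ g : C(spectrum ℝ a, ℝ), ψ (T g) = g ⟨ν, hν⟩ := by
    intro g
    have hmem : T g ∈ p := ⟨g, rfl⟩
    have := hext ⟨T g, hmem⟩
    rw [this]
    show f₀ ⟨T g, hmem⟩ = _
    have : (⟨T g, hmem⟩ : p) = e g := by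
      apply Subtype.ext
      rw [LinearEquiv.ofInjective_apply]; rfl
    rw [this]
    show evν (e.symm (e g)) = _
    rw [e.symm_apply_apply]
    rfl
  refine ⟨ψ, ?_, ?_, ?_, ?_⟩
  · rw [hnorm]
    exact f₀.mkContinuous_norm_le zero_le_one hbound
  · have := hψval 1
    rwa [map_one T] at this
  · have := hψval ((ContinuousMap.id ℝ).restrict <| spectrum ℝ a)
    rwa [cfcHom_id ha] at this
  · have := hψval (((ContinuousMap.id ℝ).restrict <| spectrum ℝ a) *
      ((ContinuousMap.id ℝ).restrict <| spectrum ℝ a))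
    rwa [map_mul, cfcHom_id ha] at this

end Aux

section Aux2
variable {A : Type*} [CStarAlgebra A] [PartialOrder A] [StarOrderedRing A]

lemma state_nonneg [Nontrivial A] (ψ : A →L[ℝ] ℝ) (hψn : ‖ψ‖ ≤ 1) (hψ1 : ψ 1 = 1)
    {b : A} (hb : 0 ≤ b) : 0 ≤ ψ b := by
  have hbsa : IsSelfAdjoint b := .of_nonneg hb
  set M := ‖b‖ with hM
  have hcfc : b - (M / 2) • (1 : A) = cfc (fun t : ℝ => t - M / 2) b := by
    rw [cfc_sub _ _ b, cfc_id' ℝ b, cfc_const _ b, Algebra.algebraMap_eq_smul_one]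
  have hnorm : ‖b - (M / 2) • (1 : A)‖ ≤ M / 2 := by
    rw [hcfc]
    refine norm_cfc_le (by positivity) fun t ht => ?_
    have h0 : 0 ≤ t := spectrum_nonneg_of_nonneg hb ht
    have h1 : t ≤ M := by
      have := spectrum.norm_le_norm_of_mem ht
      rwa [Real.norm_eq_abs, abs_of_nonneg h0] at this
    rw [Real.norm_eq_abs]
    rw [abs_le]
    constructor <;> linarith
  have key : |ψ (b - (M / 2) • (1 : A))| ≤ M / 2 := by
    calc |ψ (b - (M / 2) • 1)| ≤ ‖ψ‖ * ‖b - (M / 2) • (1 : A)‖ := ψ.le_opNorm _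
    _ ≤ 1 * (M / 2) := by
        apply mul_le_mul hψn hnorm (norm_nonneg _) zero_le_one
    _ = M / 2 := one_mul _
  rw [map_sub, map_smul, hψ1, smul_eq_mul, mul_one] at key
  have := abs_le.mp key
  linarith [this.1]

lemma state_cross_zero (ψ : A →L[ℝ] ℝ) (hψ : ∀ b : A, 0 ≤ b → 0 ≤ ψ b)
    {c b : A} (hc : IsSelfAdjoint c) (hb : IsSelfAdjoint b) (hcc : ψ (c * c) = 0) :
    ψ (c * b + b * c) = 0 := by
  have key : ∀ t : ℝ, 0 ≤ t * ψ (c * b + b * c) + ψ (b * b) := by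
    intro t
    have h0 : 0 ≤ ψ (star (t • c + b) * (t • c + b)) := hψ _ (star_mul_self_nonneg _)
    have hsa : star (t • c + b) = t • c + b := ((IsSelfAdjoint.all t).smul hc).add hb
    rw [hsa] at h0
    have hexp : (t • c + b) * (t • c + b)
        = (t * t) • (c * c) + t • (c * b + b * c) + b * b := by
      simp only [add_mul, mul_add, smul_mul_assoc, mul_smul_comm, smul_smul, smul_add]
      abel
    rw [hexp, map_add, map_add, map_smul, map_smul, hcc, smul_eq_mul, smul_eq_mul,
      mul_zero, zero_add] at h0
    exact h0
  by_contra hne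
  have hβ : ψ (c * b + b * c) ≠ 0 := hne
  have := key (-(ψ (b * b) + 1) / ψ (c * b + b * c))
  rw [div_mul_cancel₀ _ hβ] at this
  linarith

lemma norm_mem_spectrum_of_nonneg [Nontrivial A] {a : A} (ha : 0 ≤ a) :
    ‖a‖ ∈ spectrum ℝ a := by
  have hsa : IsSelfAdjoint a := .of_nonneg ha
  have hg : IsGreatest ((fun t : ℝ => ‖t‖) '' spectrum ℝ a) ‖cfc (id : ℝ → ℝ) a‖ :=
    IsGreatest.norm_cfc id a
  rw [cfc_id ℝ a] at hg
  obtain ⟨t, ht, hteq⟩ := hg.1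
  have h0 : 0 ≤ t := spectrum_nonneg_of_nonneg ha ht
  simp only [Real.norm_eq_abs, abs_of_nonneg h0] at hteq
  rwa [← hteq]

end Aux2

lemma scalar_endgame {t ν ε : ℝ} (ht : 0 ≤ t) (hν0 : 0 ≤ ν) (hε0 : 0 ≤ ε) (hε1 : ε < 1)
    (hkey : ν * t ≤ ε * ε - 1 + 2 * t - t * t) : ν ≤ 2 * (ε * ε) := by
  rcases ht.eq_or_lt with h | h
  · exfalso
    rw [← h] at hkey
    nlinarith
  · have h1ε : ε * ε ≤ 1 := by nlinarith
    nlinarith [sq_nonneg (t - 1 + ε * ε), mul_nonneg (mul_nonneg hε0 hε0) (sub_nonneg.2 h1ε)]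

/-- In a unital C*-algebra, if `‖1 - x‖ < 1` and `x = u * m` is the polar
decomposition of `x` (so `u` is unitary and `m = |x| = (x* x)^{1/2}`, i.e. `m` is a nonnegative
self-adjoint element with `m * m = x* x`), then `‖1 - u‖ ≤ √2 * ‖1 - x‖`. -/
theorem stmt0 {A : Type*} [CStarAlgebra A] [PartialOrder A] [StarOrderedRing A]
    (x m : A) (u : A) (hu : u ∈ unitary A)
    (hm_sa : IsSelfAdjoint m) (hm_nonneg : (0 : A) ≤ m) (hm_sq : m * m = star x * x)
    (hpolar : x = u * m) (hx : ‖(1 : A) - x‖ < 1) :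
    ‖(1 : A) - u‖ ≤ Real.sqrt 2 * ‖(1 : A) - x‖ := by
  by_cases htriv : (1 : A) = 0
  · haveI : Subsingleton A := subsingleton_of_zero_eq_one htriv.symm
    have h0 : (1 : A) - u = 0 := Subsingleton.elim _ _
    rw [h0, norm_zero]
    exact mul_nonneg (Real.sqrt_nonneg 2) (norm_nonneg _)
  haveI : Nontrivial A := nontrivial_of_ne 1 0 htriv
  obtain ⟨hu1, hu2⟩ := Unitary.mem_iff.mp hu
  obtain ⟨ε, hεdef⟩ : ∃ ε : ℝ, ε = ‖(1 : A) - x‖ := ⟨_, rfl⟩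
  have hε0 : 0 ≤ ε := hεdef ▸ norm_nonneg _
  have hε1 : ε < 1 := hεdef ▸ hx
  obtain ⟨y, hy⟩ : ∃ y : A, y = (1 : A) - x := ⟨_, rfl⟩
  -- two basic order inequalities
  have hyn : ‖y‖ = ε := by rw [hy, hεdef]
  have hB1 : star y * y ≤ algebraMap ℝ A (ε * ε) := by
    have := IsSelfAdjoint.le_algebraMap_norm_self (IsSelfAdjoint.star_mul_self y)
    rwa [CStarRing.norm_star_mul_self, hyn] at this
  have hB2' : y * star y ≤ algebraMap ℝ A (ε * ε) := by
    have := IsSelfAdjoint.le_algebraMap_norm_self (IsSelfAdjoint.mul_star_self y)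
    rwa [CStarRing.norm_self_mul_star, hyn] at this
  have hB2 : star u * (y * star y) * u ≤ algebraMap ℝ A (ε * ε) := by
    calc star u * (y * star y) * u ≤ star u * algebraMap ℝ A (ε * ε) * u :=
          star_left_conjugate_le_conjugate hB2' u
      _ = algebraMap ℝ A (ε * ε) := by
          rw [Algebra.algebraMap_eq_smul_one, mul_smul_comm, smul_mul_assoc, mul_one, hu1]
  have hG : (0 : A) ≤ algebraMap ℝ A (2 * (ε * ε))
      - (star y * y + star u * (y * star y) * u) := by
    rw [sub_nonneg]
    refine (add_le_add hB1 hB2).trans ?_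
    rw [← map_add]
    exact le_of_eq (by ring_nf)
  -- the element a = (1-u)* (1-u) = 1 + 1 - u - u*
  obtain ⟨a, ha_def⟩ : ∃ a : A, a = (1 : A) + 1 - u - star u := ⟨_, rfl⟩
  have ha_eq : star ((1 : A) - u) * ((1 : A) - u) = a := by
    rw [star_sub, star_one, ha_def]
    calc ((1 : A) - star u) * (1 - u)
        = 1 - u - star u + star u * u := by noncomm_ring
      _ = (1 : A) + 1 - u - star u := by rw [hu1]; abel
  have ha_nonneg : (0 : A) ≤ a := ha_eq ▸ star_mul_self_nonneg _
  have ha_sa : IsSelfAdjoint a := ha_eq ▸ IsSelfAdjoint.star_mul_self _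
  obtain ⟨ν, hν_def⟩ : ∃ ν : ℝ, ν = ‖a‖ := ⟨_, rfl⟩
  have hν0 : 0 ≤ ν := hν_def ▸ norm_nonneg _
  have hν : ν ∈ spectrum ℝ a := hν_def ▸ norm_mem_spectrum_of_nonneg ha_nonneg
  obtain ⟨ψ, hψn, hψ1, hψa, hψa2⟩ := exists_spectral_state a ha_sa hν
  have hpos : ∀ b : A, 0 ≤ b → 0 ≤ ψ b := fun b hb => state_nonneg ψ hψn hψ1 hb
  have halg : ∀ r : ℝ, ψ (algebraMap ℝ A r) = r := by
    intro r
    rw [Algebra.algebraMap_eq_smul_one, map_smul, hψ1, smul_eq_mul, mul_one]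
  -- expansion identities
  have h1 : star y * y = 1 - u * m - m * star u + m * m := by
    have e1 : star y = 1 - m * star u := by
      rw [hy, star_sub, star_one, hpolar, star_mul, hm_sa.star_eq]
    rw [e1, hy, hpolar]
    calc (1 - m * star u) * (1 - u * m)
        = 1 - u * m - m * star u + m * (star u * u) * m := by noncomm_ring
      _ = 1 - u * m - m * star u + m * m := by rw [hu1, mul_one]
  have h3 : star u * (y * star y) * u = 1 - m * u - star u * m + m * m := by
    rw [hy, hpolar, star_sub, star_one, star_mul, hm_sa.star_eq]
    calc star u * ((1 - u * m) * (1 - m * star u)) * u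
        = star u * u - (star u * u) * m * u - star u * m * (star u * u)
            + (star u * u) * m * m * (star u * u) := by noncomm_ring
      _ = 1 - m * u - star u * m + m * m := by rw [hu1]; noncomm_ring
  -- second moment bound
  have hq : ψ m * ψ m ≤ ψ (m * m) := by
    have hd_sa : IsSelfAdjoint (m - ψ m • (1 : A)) :=
      hm_sa.sub ((IsSelfAdjoint.all (ψ m)).smul (IsSelfAdjoint.one A))
    have hd0' := star_mul_self_nonneg (m - ψ m • (1 : A))
    rw [hd_sa.star_eq] at hd0'
    have hd0 := hpos _ hd0'
    have hexp : (m - ψ m • (1 : A)) * (m - ψ m • (1 : A))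
        = m * m - ψ m • m - ψ m • m + (ψ m * ψ m) • (1 : A) := by
      simp only [sub_mul, mul_sub, smul_mul_assoc, mul_smul_comm, smul_smul, smul_sub,
        one_mul, mul_one]
      abel
    rw [hexp] at hd0
    simp only [map_add, map_sub, map_smul, hψ1, smul_eq_mul, mul_one] at hd0
    linarith
  -- cross-term identity
  have hc_sa : IsSelfAdjoint (ν • (1 : A) - a) :=
    ((IsSelfAdjoint.all ν).smul (IsSelfAdjoint.one A)).sub ha_sa
  have hcc : ψ ((ν • (1 : A) - a) * (ν • (1 : A) - a)) = 0 := by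
    have hexp : (ν • (1 : A) - a) * (ν • (1 : A) - a)
        = (ν * ν) • (1 : A) - ν • a - ν • a + a * a := by
      simp only [sub_mul, mul_sub, smul_mul_assoc, mul_smul_comm, smul_smul, smul_sub,
        one_mul, mul_one]
      abel
    rw [hexp]
    simp only [map_add, map_sub, map_smul, hψ1, hψa, hψa2, smul_eq_mul, mul_one]
    ring
  have hcross0 := state_cross_zero ψ hpos hc_sa hm_sa hcc
  have hce : (ν • (1 : A) - a) * m + m * (ν • (1 : A) - a)
      = (ν • m - a * m) + (ν • m - m * a) := by
    simp only [sub_mul, mul_sub, smul_mul_assoc, mul_smul_comm, one_mul, mul_one]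
  rw [hce] at hcross0
  simp only [map_add, map_sub, map_smul, smul_eq_mul] at hcross0
  -- relating the cross terms to a
  have hel1 : u * m + star u * m = m + m - a * m := by rw [ha_def]; noncomm_ring
  have hel2 : m * star u + m * u = m + m - m * a := by rw [ha_def]; noncomm_ring
  have he1 := congrArg ψ hel1
  have he2 := congrArg ψ hel2
  simp only [map_add, map_sub] at he1 he2
  -- evaluate the main positivity statement
  have hψG := hpos _ hG
  rw [h1, h3] at hψG
  simp only [map_add, map_sub, hψ1, halg] at hψG
  -- scalar endgame
  have hkey : ν * ψ m ≤ ε * ε - 1 + 2 * ψ m - ψ m * ψ m := by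
    linarith only [hψG, hcross0, he1, he2, hq]
  have hν2 : ν ≤ 2 * (ε * ε) :=
    scalar_endgame (hpos m hm_nonneg) hν0 hε0 hε1 hkey
  -- conclude
  have hnorm2 : ‖(1 : A) - u‖ * ‖(1 : A) - u‖ = ν := by
    rw [← CStarRing.norm_star_mul_self, ha_eq, hν_def]
  rw [← hεdef]
  calc ‖(1 : A) - u‖ = Real.sqrt (‖(1 : A) - u‖ * ‖(1 : A) - u‖) :=
        (Real.sqrt_mul_self (norm_nonneg _)).symm
    _ ≤ Real.sqrt (2 * (ε * ε)) := Real.sqrt_le_sqrt (by rw [hnorm2]; exact hν2)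
    _ = Real.sqrt 2 * ε := by
        rw [Real.sqrt_mul (by norm_num : (0:ℝ) ≤ 2), Real.sqrt_mul_self hε0]
end

section
/- Let A and B be C*-subalgebras of a C*-algebra C such that A ⊆ B, and suppose that for every b in the unit ball of B there exists a ∈ A in the unit ball with ‖b - a‖ < 1 (i.e., B ⊂_1 A). Then A = B. -/
/-- Let `A ⊆ B` be C*-subalgebras of a C*-algebra `C` (norm-closed star
subalgebras), and suppose `B ⊂₁ A`: there is `γ' < 1` such that every element of the unit
ball of `B` is within distance `γ'` of an element of `A`.  Then `A = B`. -/
theorem stmt4 {C : Type*} [NonUnitalCStarAlgebra C]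
    (A B : NonUnitalStarSubalgebra ℂ C)
    (hA_closed : IsClosed (A : Set C)) (hB_closed : IsClosed (B : Set C))
    (hAB : A ≤ B)
    (hnear : ∃ γ' : ℝ, γ' < 1 ∧ ∀ b ∈ B, ‖b‖ ≤ 1 → ∃ a ∈ A, ‖b - a‖ ≤ γ') :
    A = B := by
  obtain ⟨γ', hγ'1, hγ'⟩ := hnear
  set γ : ℝ := max γ' 0 with hγdef
  have hγ0 : 0 ≤ γ := le_max_right _ _
  have hγ1 : γ < 1 := max_lt hγ'1 one_pos
  -- Key: every b ∈ B is within γ * ‖b‖ of A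
  have key : ∀ b ∈ B, ∃ a ∈ A, ‖b - a‖ ≤ γ * ‖b‖ := by
    intro b hb
    rcases eq_or_ne b 0 with rfl | hb0
    · exact ⟨0, A.zero_mem, by simp⟩
    · have hbn : (0 : ℝ) < ‖b‖ := norm_pos_iff.mpr hb0
      set u : C := ((‖b‖⁻¹ : ℝ) : ℂ) • b with hu
      have huB : u ∈ B := B.smul_mem _ hb
      have hun : ‖u‖ = 1 := by
        rw [hu, norm_smul]
        simp [norm_inv, hbn.ne']
      obtain ⟨a, haA, ha⟩ := hγ' u huB hun.le
      refine ⟨((‖b‖ : ℝ) : ℂ) • a, A.smul_mem _ haA, ?_⟩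
      have : b - ((‖b‖ : ℝ) : ℂ) • a = ((‖b‖ : ℝ) : ℂ) • (u - a) := by
        rw [smul_sub, hu, smul_smul]
        norm_cast
        rw [mul_inv_cancel₀ hbn.ne', one_smul]
      rw [this, norm_smul]
      have h1 : ‖((‖b‖ : ℝ) : ℂ)‖ = ‖b‖ := by
        simp [Complex.norm_real, abs_of_nonneg hbn.le]
      rw [h1, mul_comm]
      exact mul_le_mul (ha.trans (le_max_left _ _)) le_rfl hbn.le hγ0
  -- Show B ≤ A via infDist
  refine le_antisymm hAB ?_
  intro b hb
  have hne : (A : Set C).Nonempty := ⟨0, A.zero_mem⟩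
  set d : ℝ := Metric.infDist b (A : Set C) with hd
  have hd0 : 0 ≤ d := Metric.infDist_nonneg
  have hdle : ∀ ε > 0, d ≤ γ * d + ε := by
    intro ε hε
    obtain ⟨a, haA, ha⟩ := (Metric.infDist_lt_iff hne).mp
      (show d < d + ε by linarith)
    have hba : b - a ∈ B := B.sub_mem hb (hAB haA)
    obtain ⟨a', ha'A, ha'⟩ := key _ hba
    have h2 : ‖b - a‖ ≤ d + ε := by
      rw [← dist_eq_norm]; exact ha.le
    have h3 : d ≤ ‖b - (a + a')‖ := by
      have := Metric.infDist_le_dist_of_mem (A.add_mem haA ha'A : a + a' ∈ (A : Set C))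
        (x := b)
      rw [dist_eq_norm] at this
      exact this
    rw [show b - (a + a') = b - a - a' by abel] at h3
    have h5 : d ≤ γ * ‖b - a‖ := h3.trans ha'
    calc d ≤ γ * (d + ε) := h5.trans (by nlinarith)
      _ = γ * d + γ * ε := by ring
      _ ≤ γ * d + ε := by nlinarith
  have hdγ : d ≤ γ * d := le_of_forall_pos_le_add hdle
  have hdz : d = 0 := by nlinarith
  have : b ∈ closure (A : Set C) := by
    rw [Metric.mem_closure_iff_infDist_zero hne]
    exact hdz
  rwa [hA_closed.closure_eq] at this
end

section
/- Let A and B be C*-subalgebras of a C*-algebra C with B ⊂_{1/2} A, i.e., there is γ' < 1/2 such that every element of the unit ball of B is within γ' of an element of A. If A is separable then B is separable. -/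
/-- Let `A`, `B` be C*-subalgebras of a C*-algebra `C` with `B ⊂_{1/2} A`:
there is `γ' < 1/2` such that every element of the unit ball of `B` is within distance `γ'`
of an element of `A`.  If `A` is norm-separable then so is `B`. -/
theorem stmt5 {C : Type*} [NonUnitalCStarAlgebra C]
    (A B : NonUnitalStarSubalgebra ℂ C)
    (hA_closed : IsClosed (A : Set C)) (hB_closed : IsClosed (B : Set C))
    (hnear : ∃ γ' : ℝ, γ' < 1 / 2 ∧ ∀ b ∈ B, ‖b‖ ≤ 1 → ∃ a ∈ A, ‖b - a‖ ≤ γ')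
    (hsep : TopologicalSpace.IsSeparable (A : Set C)) :
    TopologicalSpace.IsSeparable (B : Set C) := by
  obtain ⟨γ', hγlt, hγ⟩ := hnear
  -- γ' ≥ 0 since 0 ∈ B
  have hγ0 : 0 ≤ γ' := by
    obtain ⟨a, _, ha⟩ := hγ 0 (zero_mem B) (by simp)
    exact le_trans (norm_nonneg _) ha
  obtain ⟨r, hr_def⟩ : ∃ r : ℝ, r = γ' + 1/2 := ⟨_, rfl⟩
  have hr0 : 0 < r := by rw [hr_def]; linarith
  have hr1 : r < 1 := by linarith
  have hr2γ : 2 * γ' < r := by linarith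
  -- the closed unit ball of B
  set K : Set C := {b | b ∈ B ∧ ‖b‖ ≤ 1} with hK_def
  clear hK_def
  -- Zorn: maximal r-separated subset of K
  have hzorn : ∃ S, Maximal (· ∈ {S : Set C | S ⊆ K ∧
      ∀ s ∈ S, ∀ t ∈ S, s ≠ t → r ≤ ‖s - t‖}) S := by
    apply zorn_subset
    intro c hc hchain
    refine ⟨⋃₀ c, ⟨?_, ?_⟩, fun s hs => Set.subset_sUnion_of_mem hs⟩
    · exact Set.sUnion_subset fun u hu => (hc hu).1
    · rintro s ⟨u, hu, hsu⟩ t ⟨v, hv, htv⟩ hst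
      rcases hchain.total hu hv with h | h
      · exact (hc hv).2 s (h hsu) t htv hst
      · exact (hc hu).2 s hsu t (h htv) hst
  obtain ⟨S, ⟨hSK, hSsep⟩, hSmax⟩ := hzorn
  -- maximality: every element of K is within r of S
  have hnet : ∀ b ∈ K, ∃ s ∈ S, ‖b - s‖ < r := by
    intro b hb
    by_contra hcon
    push_neg at hcon
    have hins : insert b S ⊆ S := by
      refine hSmax ⟨?_, ?_⟩ (Set.subset_insert b S)
      · exact Set.insert_subset hb hSK
      · rintro s (rfl | hs) t (rfl | ht) hst
        · exact absurd rfl hst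
        · have := hcon t ht; rwa [← norm_sub_rev] at this ⊢
        · rw [norm_sub_rev]; exact hcon s hs
        · exact hSsep s hs t ht hst
    have hbS : b ∈ S := hins (Set.mem_insert b S)
    have := hcon b hbS
    simp only [sub_self, norm_zero] at this
    linarith
  -- S is countable, via the countable dense subset of A
  obtain ⟨D, hDcount, hAD⟩ := hsep
  have hScount : S.Countable := by
    obtain ⟨η, hη_def⟩ : ∃ η : ℝ, η = (r - 2*γ')/2 := ⟨_, rfl⟩
    have hη0 : 0 < η := by rw [hη_def]; linarith
    have hchoose : ∀ s ∈ S, ∃ d ∈ D, ‖s - d‖ < γ' + η := by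
      intro s hs
      obtain ⟨hsB, hs1⟩ := hSK hs
      obtain ⟨a, haA, ha⟩ := hγ s hsB hs1
      have haD : a ∈ closure D := hAD haA
      obtain ⟨d, hdD, hd⟩ := Metric.mem_closure_iff.1 haD η hη0
      refine ⟨d, hdD, ?_⟩
      calc ‖s - d‖ ≤ ‖s - a‖ + ‖a - d‖ := norm_sub_le_norm_sub_add_norm_sub s a d
        _ < γ' + η := by rw [dist_eq_norm] at hd; linarith
    choose! g hgD hg using hchoose
    have hginj : Set.InjOn g S := by
      intro s hs t ht hgst
      by_contra hne
      have h1 := hg s hs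
      have h2 := hg t ht
      have h3 := hSsep s hs t ht hne
      have hb : ‖s - t‖ ≤ ‖s - g s‖ + ‖t - g t‖ := by
        calc ‖s - t‖ = ‖(s - g s) + (g s - t)‖ := by rw [sub_add_sub_cancel]
          _ ≤ ‖s - g s‖ + ‖g s - t‖ := norm_add_le _ _
          _ = ‖s - g s‖ + ‖t - g s‖ := by rw [norm_sub_rev (g s) t]
          _ = ‖s - g s‖ + ‖t - g t‖ := by rw [hgst]
      have h2η : 2 * (γ' + η) = r := by rw [hη_def]; ring
      linarith
    exact Set.MapsTo.countable_of_injOn (fun s hs => hgD s hs) hginj hDcount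
  -- every element of K is in the closure of span ℂ S
  have hiter : ∀ n : ℕ, ∀ b ∈ B, ‖b‖ ≤ 1 →
      ∃ y ∈ Submodule.span ℂ S, ‖b - y‖ ≤ r ^ n := by
    intro n
    induction n with
    | zero => intro b _ hb; exact ⟨0, Submodule.zero_mem _, by simpa using hb⟩
    | succ n ih =>
      intro b hbB hb1
      obtain ⟨s, hsS, hs⟩ := hnet b ⟨hbB, hb1⟩
      have hsB : s ∈ B := (hSK hsS).1
      set b' : C := (r : ℂ)⁻¹ • (b - s) with hb'_def
      have hb'B : b' ∈ B := B.smul_mem _ (sub_mem hbB hsB)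
      have hb'1 : ‖b'‖ ≤ 1 := by
        rw [hb'_def, norm_smul]
        have : ‖((r : ℝ) : ℂ)⁻¹‖ = r⁻¹ := by
          rw [norm_inv, Complex.norm_real, Real.norm_of_nonneg hr0.le]
        rw [this]
        rw [inv_mul_le_iff₀ hr0, mul_one]
        exact hs.le
      obtain ⟨y, hy, hby⟩ := ih b' hb'B hb'1
      refine ⟨s + (r : ℂ) • y, Submodule.add_mem _ (Submodule.subset_span hsS)
        (Submodule.smul_mem _ _ hy), ?_⟩
      have key : b - (s + (r : ℂ) • y) = (r : ℂ) • (b' - y) := by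
        rw [hb'_def, smul_sub, smul_inv_smul₀ (by exact_mod_cast hr0.ne')]
        abel
      rw [key, norm_smul]
      have : ‖((r : ℝ) : ℂ)‖ = r := by rw [Complex.norm_real, Real.norm_of_nonneg hr0.le]
      rw [this, pow_succ, mul_comm (r ^ n) r]
      exact mul_le_mul_of_nonneg_left hby hr0.le
  have hKclos : ∀ b ∈ B, ‖b‖ ≤ 1 → b ∈ closure (Submodule.span ℂ S : Set C) := by
    intro b hbB hb1
    rw [Metric.mem_closure_iff]
    intro ε hε
    obtain ⟨n, hn⟩ := exists_pow_lt_of_lt_one hε hr1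
    obtain ⟨y, hy, hby⟩ := hiter n b hbB hb1
    exact ⟨y, hy, by rw [dist_eq_norm]; exact lt_of_le_of_lt hby hn⟩
  -- conclude
  have hBclos : (B : Set C) ⊆ closure (Submodule.span ℂ S : Set C) := by
    intro b hbB
    rcases eq_or_ne b 0 with rfl | hb0
    · exact subset_closure (Submodule.zero_mem _)
    · have h1 : ((‖b‖ : ℝ) : ℂ)⁻¹ • b ∈ B := B.smul_mem _ hbB
      have h2 : ‖((‖b‖ : ℝ) : ℂ)⁻¹ • b‖ ≤ 1 := by
        rw [norm_smul, norm_inv, Complex.norm_real, norm_norm,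
          inv_mul_le_iff₀ (norm_pos_iff.2 hb0), mul_one]
      have h3 := hKclos _ h1 h2
      have h4 : b = ((‖b‖ : ℝ) : ℂ) • (((‖b‖ : ℝ) : ℂ)⁻¹ • b) := by
        rw [smul_inv_smul₀]
        exact_mod_cast (norm_ne_zero_iff.2 hb0)
      rw [h4]
      have : Continuous (fun x : C => ((‖b‖ : ℝ) : ℂ) • x) := continuous_const_smul _
      have := (Submodule.span ℂ S).topologicalClosure.smul_mem ((‖b‖ : ℝ) : ℂ)
        (show _ ∈ (Submodule.span ℂ S).topologicalClosure from h3)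
      exact this
  exact ((hScount.isSeparable.span).closure).mono hBclos
end

section
/- Let X ⊆ ℂ be a compact set, ε, M > 0, and f ∈ C(X) a continuous function. Then there exists η > 0 such that for every Hilbert space H, every normal operator s ∈ B(H) with spectrum contained in X, and every a ∈ B(H) with ‖a‖ ≤ M, the inequality ‖sa - as‖ < η implies ‖f(s)a - af(s)‖ < ε. -/
set_option linter.unusedSectionVars false
set_option maxHeartbeats 1000000

open NormedSpace

section CStarAux

variable {A : Type*} [NormedRing A] [StarRing A] [CStarRing A] [CompleteSpace A]
  [NormedAlgebra ℂ A] [StarModule ℂ A]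

lemma cstar_norm_one_le : ‖(1:A)‖ ≤ 1 := by
  have h := CStarRing.norm_star_mul_self (x := (1:A))
  simp only [star_one, one_mul] at h
  nlinarith [norm_nonneg (1:A)]

lemma cstar_norm_pow_le (x : A) (n : ℕ) : ‖x ^ n‖ ≤ ‖x‖ ^ n := by
  cases n with
  | zero => simpa using cstar_norm_one_le
  | succ n => exact norm_pow_le' x (Nat.succ_pos n)

lemma comm_pow (x a : A) : ∀ n : ℕ, ‖x^(n+1) * a - a * x^(n+1)‖ ≤ (n+1) * ‖x‖^n * ‖x*a - a*x‖ := by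
  intro n
  induction n with
  | zero => simp
  | succ n ih =>
    have key : x^(n+1+1) * a - a * x^(n+1+1)
        = x * (x^(n+1) * a - a * x^(n+1)) + (x*a - a*x) * x^(n+1) := by
      rw [pow_succ' x (n+1)]; noncomm_ring
    have h1 : ‖x * (x^(n+1) * a - a * x^(n+1))‖ ≤ ‖x‖ * ((n+1) * ‖x‖^n * ‖x*a - a*x‖) :=
      (norm_mul_le _ _).trans (by gcongr)
    have h2 : ‖(x*a - a*x) * x^(n+1)‖ ≤ ‖x*a - a*x‖ * ‖x‖^(n+1) :=
      (norm_mul_le _ _).trans (by gcongr; exact norm_pow_le' x (Nat.succ_pos n))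
    calc ‖x^(n+1+1) * a - a * x^(n+1+1)‖ ≤ _ + _ := key ▸ norm_add_le _ _
      _ ≤ ‖x‖ * ((n+1) * ‖x‖^n * ‖x*a - a*x‖) + ‖x*a - a*x‖ * ‖x‖^(n+1) := add_le_add h1 h2
      _ = ((n+1:ℕ)+1) * ‖x‖^(n+1) * ‖x*a - a*x‖ := by push_cast; ring

lemma exp_tsum_div (r : ℝ) : ∑' n : ℕ, r ^ n / n.factorial = Real.exp r := by
  rw [Real.exp_eq_exp_ℝ, exp_eq_tsum_div]

lemma norm_exp_le (x : A) : ‖exp x‖ ≤ Real.exp ‖x‖ := by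
  rw [exp_eq_tsum ℂ, ← exp_tsum_div]
  refine (norm_tsum_le_tsum_norm (norm_expSeries_summable' x)).trans ?_
  refine Summable.tsum_le_tsum (fun n => ?_) (norm_expSeries_summable' x)
    ((Real.summable_pow_div_factorial ‖x‖))
  rw [norm_smul]
  calc ‖((n.factorial : ℂ))⁻¹‖ * ‖x ^ n‖ ≤ (n.factorial : ℝ)⁻¹ * ‖x‖ ^ n := by
        gcongr
        · rw [norm_inv]; simp
        · exact cstar_norm_pow_le x n
    _ = ‖x‖ ^ n / n.factorial := by ring

lemma comm_exp (x a : A) : ‖exp x * a - a * exp x‖ ≤ Real.exp ‖x‖ * ‖x*a - a*x‖ := by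
  set δ := ‖x*a - a*x‖ with hδ
  set f : ℕ → A := fun n => ((n.factorial : ℂ))⁻¹ • x ^ n with hf
  have hsumf : HasSum f (exp x) := by
    rw [exp_eq_tsum ℂ]
    exact (expSeries_summable' (𝕂 := ℂ) x).hasSum
  have hsum : HasSum (fun n => f n * a - a * f n) (exp x * a - a * exp x) :=
    (hsumf.mul_right a).sub (hsumf.mul_left a)
  set d : ℕ → ℝ := fun n => (n : ℝ) * ‖x‖ ^ (n - 1) / n.factorial * δ with hd
  have hd1 : ∀ n : ℕ, d (n+1) = ‖x‖ ^ n / n.factorial * δ := by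
    intro n
    simp only [hd, Nat.add_sub_cancel, Nat.factorial_succ, Nat.cast_mul, Nat.cast_add,
      Nat.cast_one]
    have : ((n:ℝ) + 1) ≠ 0 := by positivity
    field_simp
  have hdsum : Summable d := by
    rw [← summable_nat_add_iff 1]
    simp only [hd1]
    exact (Real.summable_pow_div_factorial ‖x‖).mul_right δ
  have hbound : ∀ n : ℕ, ‖f n * a - a * f n‖ ≤ d n := by
    intro n
    cases n with
    | zero => simp [hf, hd]
    | succ n =>
      have : f (n+1) * a - a * f (n+1)
          = (((n+1).factorial : ℂ))⁻¹ • (x ^ (n+1) * a - a * x ^ (n+1)) := by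
        simp [hf, smul_mul_assoc, mul_smul_comm, smul_sub]
      rw [this, norm_smul, hd1]
      have hnf : ‖(((n+1).factorial : ℂ))⁻¹‖ = (((n+1).factorial : ℝ))⁻¹ := by
        rw [norm_inv]; simp
      rw [hnf]
      calc (((n+1).factorial : ℝ))⁻¹ * ‖x ^ (n+1) * a - a * x ^ (n+1)‖
          ≤ (((n+1).factorial : ℝ))⁻¹ * ((n+1) * ‖x‖^n * δ) := by
            gcongr
            exact comm_pow x a n
        _ = ‖x‖ ^ n / n.factorial * δ := by
            rw [Nat.factorial_succ]
            push_cast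
            have h1 : ((n:ℝ)+1) ≠ 0 := by positivity
            have h2 : ((n.factorial :ℝ)) ≠ 0 := by positivity
            field_simp
  calc ‖exp x * a - a * exp x‖ = ‖∑' n, (f n * a - a * f n)‖ := by rw [hsum.tsum_eq]
    _ ≤ ∑' n, ‖f n * a - a * f n‖ := norm_tsum_le_tsum_norm
        (hdsum.of_nonneg_of_le (fun n => norm_nonneg _) hbound)
    _ ≤ ∑' n, d n := Summable.tsum_le_tsum hbound
        (hdsum.of_nonneg_of_le (fun n => norm_nonneg _) hbound) hdsum
    _ = d 0 + ∑' n, d (n+1) := Summable.tsum_eq_zero_add hdsum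
    _ = Real.exp ‖x‖ * δ := by
        simp only [hd1]
        rw [hd]
        simp only [Nat.cast_zero, zero_mul, zero_div, zero_mul, zero_add]
        rw [tsum_mul_right, exp_tsum_div]

lemma exp_mul_exp_neg_eq_one (x : A) : exp x * exp (-x) = 1 := by
  let _ : NormedAlgebra ℚ A := .restrictScalars ℚ ℂ A
  rw [← exp_add_of_commute (Commute.neg_right (Commute.refl x)), add_neg_cancel, exp_zero]

lemma conj_bound (x a : A) :
    ‖exp x * a * exp (-x)‖ ≤ ‖a‖ + Real.exp (2*‖x‖) * ‖x*a - a*x‖ := by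
  have key : exp x * a * exp (-x) = a + (exp x * a - a * exp x) * exp (-x) := by
    have h := exp_mul_exp_neg_eq_one x
    calc exp x * a * exp (-x)
        = a * (exp x * exp (-x)) + (exp x * a - a * exp x) * exp (-x) := by noncomm_ring
      _ = a + (exp x * a - a * exp x) * exp (-x) := by rw [h, mul_one]
  rw [key]
  calc ‖a + (exp x * a - a * exp x) * exp (-x)‖
      ≤ ‖a‖ + ‖exp x * a - a * exp x‖ * ‖exp (-x)‖ :=
        (norm_add_le _ _).trans (by gcongr; exact norm_mul_le _ _)
    _ ≤ ‖a‖ + (Real.exp ‖x‖ * ‖x*a - a*x‖) * Real.exp ‖-x‖ := by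
        gcongr
        · exact comm_exp x a
        · exact norm_exp_le _
    _ = ‖a‖ + Real.exp (2*‖x‖) * ‖x*a - a*x‖ := by
        rw [norm_neg]
        rw [two_mul, Real.exp_add]
        ring

/-- A quantitative Fuglede-type bound via the Cauchy estimate. -/
lemma fuglede_bound (s a : A) (hs : IsStarNormal s) (r : ℝ) (hr : 0 < r) :
    ‖star s * a - a * star s‖ ≤ (‖a‖ + Real.exp (2*(r*‖s‖)) * (r * ‖s*a - a*s‖)) / r := by
  let _ : NormedAlgebra ℚ A := .restrictScalars ℚ ℂ A
  set w := star s with hw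
  set g : ℂ → A := fun μ => (exp (μ • w) * a) * exp (μ • (-w)) with hg
  have h4 : ∀ μ : ℂ, HasDerivAt g
      ((exp (μ•w) * w * a) * exp (μ•(-w)) + (exp (μ•w) * a) * (exp (μ•(-w)) * (-w))) μ := by
    intro μ
    exact ((hasDerivAt_exp_smul_const (𝕂 := ℂ) w μ).mul_const a).mul
      (hasDerivAt_exp_smul_const (𝕂 := ℂ) (-w) μ)
  have hder : HasDerivAt g (w * a - a * w) 0 := by
    have := h4 0
    simp only [zero_smul, exp_zero, one_mul, mul_one] at this
    convert this using 1
    noncomm_ring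
  have hdiff : Differentiable ℂ g := fun μ => (h4 μ).differentiableAt
  set C := ‖a‖ + Real.exp (2*(r*‖s‖)) * (r * ‖s*a - a*s‖) with hC
  have hbound : ∀ μ ∈ Metric.sphere (0:ℂ) r, ‖g μ‖ ≤ C := by
    intro μ hμ
    rw [mem_sphere_zero_iff_norm] at hμ
    set c := (starRingEnd ℂ) μ with hc
    set k := μ • w - c • s with hk
    have hcs : Commute w s := hs.star_comm_self
    have hk1 : Commute k (c • s) :=
      Commute.sub_left ((hcs.smul_left μ).smul_right c) (Commute.refl (c • s))
    have e1 : exp (μ • w) = exp k * exp (c • s) := by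
      rw [← exp_add_of_commute hk1, sub_add_cancel]
    have e2 : exp (μ • (-w)) = exp (-(c • s)) * exp (-k) := by
      have : μ • (-w) = -(c • s) + -k := by
        rw [smul_neg, ← sub_add_cancel (μ • w) (c • s), ← hk]
        abel
      rw [this, exp_add_of_commute (hk1.neg_left.neg_right.symm)]
    have hkskew : k ∈ skewAdjoint A := by
      rw [skewAdjoint.mem_iff, hk]
      rw [star_sub, star_smul, star_smul, hw, star_star]
      simp only [hc, Complex.star_def, Complex.conj_conj]
      abel
    have U1 : exp k ∈ unitary A := exp_mem_unitary_of_mem_skewAdjoint hkskew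
    have U2 : exp (-k) ∈ unitary A := exp_mem_unitary_of_mem_skewAdjoint (neg_mem hkskew)
    have hgval : g μ = exp k * (exp (c • s) * a * exp (-(c • s))) * exp (-k) := by
      rw [hg]
      simp only []
      rw [e1, e2]
      noncomm_ring
    rw [hgval, CStarRing.norm_mul_mem_unitary _ U2, CStarRing.norm_mem_unitary_mul _ U1]
    have := conj_bound (c • s) a
    refine this.trans ?_
    have hnc : ‖c‖ = r := by rw [hc]; rw [RCLike.norm_conj]; exact hμ
    have hncs : ‖c • s‖ = r * ‖s‖ := by rw [norm_smul, hnc]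
    have hcomm : (c • s) * a - a * (c • s) = c • (s * a - a * s) := by
      rw [smul_mul_assoc, mul_smul_comm, smul_sub]
    rw [hncs, hcomm, norm_smul, hnc, hC]
  have key := Complex.norm_deriv_le_of_forall_mem_sphere_norm_le hr
    (hdiff.diffContOnCl) hbound
  rwa [hder.deriv] at key

end CStarAux

section Framework

open scoped Classical in
/-- Extension of a continuous function on `X` to `ℂ` by zero. -/
noncomputable def extFun (X : Set ℂ) (g : C(X, ℂ)) : ℂ → ℂ :=
  fun z => if h : z ∈ X then g ⟨z, h⟩ else 0

lemma extFun_eq {X : Set ℂ} (g : C(X, ℂ)) {z : ℂ} (h : z ∈ X) : extFun X g z = g ⟨z, h⟩ := by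
  simp [extFun, h]

lemma extFun_continuousOn (X : Set ℂ) (g : C(X, ℂ)) : ContinuousOn (extFun X g) X := by
  rw [continuousOn_iff_continuous_restrict]
  have : X.domRestrict (extFun X g) = ⇑g := by
    ext x
    simp [extFun, x.2]
  rw [this]
  exact g.continuous

/-- The key uniform commutator property. -/
def GoodCommutator (X : Set ℂ) (M : ℝ) (φ : ℂ → ℂ) : Prop :=
  ∀ δ > (0 : ℝ), ∃ η > (0 : ℝ), ∀ (H : Type) (_ : NormedAddCommGroup H)
    (_ : InnerProductSpace ℂ H) (_ : CompleteSpace H) (s a : H →L[ℂ] H),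
    IsStarNormal s → spectrum ℂ s ⊆ X → ‖a‖ ≤ M →
    ‖s * a - a * s‖ < η → ‖cfc φ s * a - a * cfc φ s‖ < δ

lemma GoodCommutator.congr {X : Set ℂ} {M : ℝ} {φ ψ : ℂ → ℂ} (h : Set.EqOn φ ψ X)
    (hφ : GoodCommutator X M φ) : GoodCommutator X M ψ := by
  intro δ hδ
  obtain ⟨η, hη, hmain⟩ := hφ δ hδ
  refine ⟨η, hη, fun H i1 i2 i3 s a hs hsub hM' hcomm => ?_⟩
  have : cfc ψ s = cfc φ s := cfc_congr fun z hz => (h (hsub hz)).symm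
  rw [this]
  exact hmain H i1 i2 i3 s a hs hsub hM' hcomm

lemma norm_le_of_spectrum_subset {H : Type} [NormedAddCommGroup H] [InnerProductSpace ℂ H]
    [CompleteSpace H] {s : H →L[ℂ] H} (hs : IsStarNormal s) {X : Set ℂ} (hsub : spectrum ℂ s ⊆ X)
    {R : ℝ} (hR0 : 0 ≤ R) (hR : ∀ z ∈ X, ‖z‖ ≤ R) : ‖s‖ ≤ R := by
  have hns : IsStarNormal s := hs
  have := norm_cfc_le (A := H →L[ℂ] H) (f := (id : ℂ → ℂ)) (a := s) hR0
    (fun z hz => by simpa using hR z (hsub hz))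
  rwa [cfc_id ℂ s] at this

end Framework

/-- Let `X ⊆ ℂ` be compact, `ε, M > 0`, and `f` a continuous function on `X`.
Then there exists `η > 0` such that for every Hilbert space `H`, every normal operator
`s ∈ B(H)` with spectrum contained in `X`, and every `a ∈ B(H)` with `‖a‖ ≤ M`,
`‖sa - as‖ < η` implies `‖f(s)a - af(s)‖ < ε`, where `f(s)` is given by the continuous
functional calculus. -/
theorem stmt8 (X : Set ℂ) (hX : IsCompact X) (ε M : ℝ) (hε : 0 < ε) (hM : 0 < M)
    (f : ℂ → ℂ) (hf : ContinuousOn f X) :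
    ∃ η > (0 : ℝ), ∀ (H : Type) (_ : NormedAddCommGroup H) (_ : InnerProductSpace ℂ H)
      (_ : CompleteSpace H) (s a : H →L[ℂ] H), IsStarNormal s → spectrum ℂ s ⊆ X →
      ‖a‖ ≤ M → ‖s * a - a * s‖ < η → ‖cfc f s * a - a * cfc f s‖ < ε := by
  haveI hcs : CompactSpace ↥X := isCompact_iff_compactSpace.mp hX
  obtain ⟨R₀, hR₀⟩ := hX.isBounded.subset_closedBall 0
  set R : ℝ := |R₀| + 1 with hRdef
  have hRpos : 0 < R := by positivity
  have hR : ∀ z ∈ X, ‖z‖ ≤ R := by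
    intro z hz
    have := hR₀ hz
    rw [Metric.mem_closedBall, dist_zero_right] at this
    calc ‖z‖ ≤ R₀ := this
      _ ≤ |R₀| + 1 := by cases abs_cases R₀ <;> linarith
  -- the induction over continuous functions on X
  have key : ∀ g : C(X, ℂ), GoodCommutator X M (extFun X g) := by
    intro g
    induction g using ContinuousMap.induction_on_of_compact with
    | const r =>
      refine GoodCommutator.congr (φ := fun _ => r)
        (fun z hz => by rw [extFun_eq _ hz]; simp) ?_
      intro δ hδ
      refine ⟨1, one_pos, fun H i1 i2 i3 s a hs hsub hM' hcomm => ?_⟩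
      have hns : IsStarNormal s := hs
      rw [cfc_const r s]
      simp only [Algebra.commutes r a, sub_self, norm_zero]
      exact hδ
    | id =>
      refine GoodCommutator.congr (φ := fun z => z)
        (fun z hz => by rw [extFun_eq _ hz]; simp) ?_
      intro δ hδ
      refine ⟨δ, hδ, fun H i1 i2 i3 s a hs hsub hM' hcomm => ?_⟩
      have hns : IsStarNormal s := hs
      rwa [cfc_id' ℂ s]
    | star_id =>
      have heq : Set.EqOn (fun z : ℂ => star z)
          (extFun X (star (ContinuousMap.restrict X (ContinuousMap.id ℂ)))) X := by
        intro z hz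
        rw [extFun_eq _ hz]
        simp
      refine GoodCommutator.congr heq ?_
      intro δ hδ
      set r : ℝ := 2*(M+1)/δ with hrdef
      have hr : 0 < r := by positivity
      refine ⟨δ/2 * Real.exp (-(2*(r*R))), by positivity,
        fun H i1 i2 i3 s a hs hsub hM' hcomm => ?_⟩
      have hns : IsStarNormal s := hs
      have hsR : ‖s‖ ≤ R := norm_le_of_spectrum_subset hs hsub hRpos.le hR
      have hse : cfc (fun z : ℂ => star z) s = star s := by
        have h0 := cfc_star (R := ℂ) (fun z : ℂ => z) s
        rwa [cfc_id' ℂ s] at h0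
      rw [hse]
      have hb := fuglede_bound s a hs r hr
      have hexp : Real.exp (2*(r*‖s‖)) ≤ Real.exp (2*(r*R)) := by
        apply Real.exp_le_exp.mpr
        nlinarith
      calc ‖star s * a - a * star s‖
          ≤ (‖a‖ + Real.exp (2*(r*‖s‖)) * (r * ‖s*a - a*s‖)) / r := hb
        _ ≤ (M + Real.exp (2*(r*R)) * (r * ‖s*a - a*s‖)) / r := by
            gcongr
        _ < (M + Real.exp (2*(r*R)) * (r * (δ/2 * Real.exp (-(2*(r*R)))))) / r := by
            gcongr
        _ = M / r + δ/2 := by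
            rw [Real.exp_neg]
            have h1 : Real.exp (2*(r*R)) ≠ 0 := Real.exp_ne_zero _
            field_simp
        _ < δ := by
            rw [hrdef]
            rw [div_div_eq_mul_div]
            have : M * δ / (2*(M+1)) < δ/2 := by
              rw [div_lt_div_iff₀ (by positivity) (by positivity)]
              nlinarith
            linarith
    | add g h ihg ihh =>
      intro δ hδ
      obtain ⟨η₁, hη₁, H1⟩ := ihg (δ/2) (by positivity)
      obtain ⟨η₂, hη₂, H2⟩ := ihh (δ/2) (by positivity)
      refine ⟨min η₁ η₂, lt_min hη₁ hη₂, fun H i1 i2 i3 s a hs hsub hM' hcomm => ?_⟩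
      have hns : IsStarNormal s := hs
      have e : cfc (extFun X (g + h)) s = cfc (extFun X g) s + cfc (extFun X h) s := by
        rw [← cfc_add s _ _ ((extFun_continuousOn X g).mono hsub)
          ((extFun_continuousOn X h).mono hsub)]
        refine cfc_congr fun z hz => ?_
        rw [extFun_eq _ (hsub hz), extFun_eq _ (hsub hz), extFun_eq _ (hsub hz)]
        simp
      rw [e]
      have expand : (cfc (extFun X g) s + cfc (extFun X h) s) * a
          - a * (cfc (extFun X g) s + cfc (extFun X h) s)
          = (cfc (extFun X g) s * a - a * cfc (extFun X g) s)
            + (cfc (extFun X h) s * a - a * cfc (extFun X h) s) := by noncomm_ring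
      rw [expand]
      have c1 := H1 H i1 i2 i3 s a hs hsub hM' (hcomm.trans_le (min_le_left _ _))
      have c2 := H2 H i1 i2 i3 s a hs hsub hM' (hcomm.trans_le (min_le_right _ _))
      calc ‖(cfc (extFun X g) s * a - a * cfc (extFun X g) s)
            + (cfc (extFun X h) s * a - a * cfc (extFun X h) s)‖
          ≤ ‖cfc (extFun X g) s * a - a * cfc (extFun X g) s‖
            + ‖cfc (extFun X h) s * a - a * cfc (extFun X h) s‖ := norm_add_le _ _
        _ < δ/2 + δ/2 := add_lt_add c1 c2
        _ = δ := by ring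
    | mul g h ihg ihh =>
      intro δ hδ
      set K : ℝ := ‖g‖ + ‖h‖ + 1 with hKdef
      have hK : 0 < K := by positivity
      obtain ⟨η₁, hη₁, H1⟩ := ihg (δ/(2*K)) (by positivity)
      obtain ⟨η₂, hη₂, H2⟩ := ihh (δ/(2*K)) (by positivity)
      refine ⟨min η₁ η₂, lt_min hη₁ hη₂, fun H i1 i2 i3 s a hs hsub hM' hcomm => ?_⟩
      have hns : IsStarNormal s := hs
      have e : cfc (extFun X (g * h)) s = cfc (extFun X g) s * cfc (extFun X h) s := by
        rw [← cfc_mul _ _ s ((extFun_continuousOn X g).mono hsub)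
          ((extFun_continuousOn X h).mono hsub)]
        refine cfc_congr fun z hz => ?_
        rw [extFun_eq _ (hsub hz), extFun_eq _ (hsub hz), extFun_eq _ (hsub hz)]
        simp
      rw [e]
      set u := cfc (extFun X g) s with hu
      set v := cfc (extFun X h) s with hv
      have hub : ‖u‖ ≤ K := by
        rw [hu]
        refine norm_cfc_le hK.le fun z hz => ?_
        rw [extFun_eq _ (hsub hz)]
        calc ‖g ⟨z, hsub hz⟩‖ ≤ ‖g‖ := g.norm_coe_le_norm _
          _ ≤ K := by rw [hKdef]; nlinarith [norm_nonneg h]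
      have hvb : ‖v‖ ≤ K := by
        rw [hv]
        refine norm_cfc_le hK.le fun z hz => ?_
        rw [extFun_eq _ (hsub hz)]
        calc ‖h ⟨z, hsub hz⟩‖ ≤ ‖h‖ := h.norm_coe_le_norm _
          _ ≤ K := by rw [hKdef]; nlinarith [norm_nonneg g]
      have expand : (u * v) * a - a * (u * v)
          = u * (v * a - a * v) + (u * a - a * u) * v := by noncomm_ring
      rw [expand]
      have c1 := H1 H i1 i2 i3 s a hs hsub hM' (hcomm.trans_le (min_le_left _ _))
      have c2 := H2 H i1 i2 i3 s a hs hsub hM' (hcomm.trans_le (min_le_right _ _))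
      calc ‖u * (v * a - a * v) + (u * a - a * u) * v‖
          ≤ ‖u * (v * a - a * v)‖ + ‖(u * a - a * u) * v‖ := norm_add_le _ _
        _ ≤ ‖u‖ * ‖v * a - a * v‖ + ‖u * a - a * u‖ * ‖v‖ :=
            add_le_add (norm_mul_le _ _) (norm_mul_le _ _)
        _ ≤ K * ‖v * a - a * v‖ + ‖u * a - a * u‖ * K := by
            gcongr
        _ < K * (δ/(2*K)) + (δ/(2*K)) * K := by
            have h1 : ‖v * a - a * v‖ < δ/(2*K) := c2
            have h2 : ‖u * a - a * u‖ < δ/(2*K) := c1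
            gcongr
        _ = δ := by
            have hKne : K ≠ 0 := hK.ne'
            field_simp
            ring
    | frequently g hfreq =>
      intro δ hδ
      set δ₀ : ℝ := δ/(4*(M+1)) with hδ₀def
      have hδ₀ : 0 < δ₀ := by positivity
      have hev : ∀ᶠ h in nhds g, dist h g < δ₀ :=
        Metric.eventually_nhds_iff.mpr ⟨δ₀, hδ₀, fun {y} hy => hy⟩
      obtain ⟨h, hPh, hdist⟩ := (hfreq.and_eventually hev).exists
      obtain ⟨η, hη, Hmain⟩ := hPh (δ/2) (by positivity)
      refine ⟨η, hη, fun H i1 i2 i3 s a hs hsub hM' hcomm => ?_⟩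
      have hns : IsStarNormal s := hs
      have hc := Hmain H i1 i2 i3 s a hs hsub hM' hcomm
      set u := cfc (extFun X g) s with hu
      set v := cfc (extFun X h) s with hv
      have huv : ‖u - v‖ ≤ δ₀ := by
        have hsubeq : u - v = cfc (fun z => extFun X g z - extFun X h z) s := by
          rw [cfc_sub _ _ s ((extFun_continuousOn X g).mono hsub)
            ((extFun_continuousOn X h).mono hsub)]
        rw [hsubeq]
        refine norm_cfc_le hδ₀.le fun z hz => ?_
        rw [extFun_eq _ (hsub hz), extFun_eq _ (hsub hz)]
        have : g ⟨z, hsub hz⟩ - h ⟨z, hsub hz⟩ = (g - h) ⟨z, hsub hz⟩ := by simp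
        rw [this]
        calc ‖(g - h) ⟨z, hsub hz⟩‖ ≤ ‖g - h‖ := (g - h).norm_coe_le_norm _
          _ = dist h g := by rw [dist_eq_norm, ← norm_neg]; congr 1; abel
          _ ≤ δ₀ := hdist.le
      have expand : u * a - a * u
          = (v * a - a * v) + ((u - v) * a - a * (u - v)) := by noncomm_ring
      rw [expand]
      calc ‖(v * a - a * v) + ((u - v) * a - a * (u - v))‖
          ≤ ‖v * a - a * v‖ + ‖(u - v) * a - a * (u - v)‖ := norm_add_le _ _
        _ ≤ ‖v * a - a * v‖ + (‖u - v‖ * ‖a‖ + ‖a‖ * ‖u - v‖) := by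
            gcongr
            calc ‖(u - v) * a - a * (u - v)‖ ≤ ‖(u - v) * a‖ + ‖a * (u - v)‖ := norm_sub_le _ _
              _ ≤ ‖u - v‖ * ‖a‖ + ‖a‖ * ‖u - v‖ :=
                  add_le_add (norm_mul_le _ _) (norm_mul_le _ _)
        _ < δ/2 + (δ₀ * M + M * δ₀) := by
            have h2 : ‖u - v‖ * ‖a‖ ≤ δ₀ * M :=
              mul_le_mul huv hM' (norm_nonneg _) hδ₀.le
            have h3 : ‖a‖ * ‖u - v‖ ≤ M * δ₀ :=
              mul_le_mul hM' huv (norm_nonneg _) (by linarith)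
            have := add_lt_add_of_lt_of_le hc (add_le_add h2 h3)
            linarith
        _ ≤ δ := by
            rw [hδ₀def]
            have h4 : (0:ℝ) < 4*(M+1) := by positivity
            have hkey : δ/(4*(M+1)) * M ≤ δ/4 := by
              rw [div_mul_eq_mul_div, div_le_div_iff₀ h4 (by norm_num : (0:ℝ) < 4)]
              nlinarith
            have hkey2 : M * (δ/(4*(M+1))) ≤ δ/4 := by
              rw [mul_comm]; exact hkey
            linarith
  -- conclusion
  set F : C(X, ℂ) := ⟨X.restrict f, hf.restrict⟩ with hF
  have hgood : GoodCommutator X M f := by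
    refine GoodCommutator.congr (φ := extFun X F) (fun z hz => ?_) (key F)
    rw [extFun_eq _ hz]
    rfl
  obtain ⟨η, hη, hmain⟩ := hgood ε hε
  exact ⟨η, hη, hmain⟩
end
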